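/- Every continuous right unit operation ρ:S→S on a left-uniformizable topological semigroup S is dicontinuous. Consequently, every left-uniformizable topological right unosemigroup is ditopological. -/

import Mathlib

open Topology

/-- Dicontinuity of a left unit operation `l` at `x`:
for every neighborhood `O` of `x` there are a neighborhood `U` of `x` and a
neighborhood `W` of `l x` in the subspace `l(S)` such that
`(W ⟍ U) ∩ l⁻¹(W) ⊆ O`, where `W ⟍ U = {z | ∃ w ∈ W, w * z ∈ U}`. -/
def LeftDicontAt {S : Type*} [TopologicalSpace S] (mul : S → S → S) (l : S → S) (x : S) : Prop :=
  ∀ O ∈ 𝓝 x, ∃ U ∈ 𝓝 x, ∃ W ∈ 𝓝[Set.range l] (l x),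
    W ⊆ Set.range l ∧ {z | l z ∈ W ∧ ∃ w ∈ W, mul w z ∈ U} ⊆ O

/-- Dicontinuity of a right unit operation `r` at `x`. -/
def RightDicontAt {S : Type*} [TopologicalSpace S] (mul : S → S → S) (r : S → S) (x : S) : Prop :=
  ∀ O ∈ 𝓝 x, ∃ U ∈ 𝓝 x, ∃ W ∈ 𝓝[Set.range r] (r x),
    W ⊆ Set.range r ∧ {z | r z ∈ W ∧ ∃ w ∈ W, mul z w ∈ U} ⊆ O

/-- Every continuous right unit operation on a left-uniformizable topological semigroup
is dicontinuous; hence every left-uniformizable topological right unosemigroup is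
ditopological. -/
theorem leftUniformizable_right_unosemigroup_ditopological {S : Type*} [UniformSpace S] [Mul S]
    (hassoc : ∀ a b c : S, a * b * c = a * (b * c))
    (hmul : Continuous fun p : S × S => p.1 * p.2)
    (hlu : ∀ U ∈ uniformity S, ∃ V ∈ uniformity S,
      ∀ x y z : S, (y, z) ∈ V → (x * y, x * z) ∈ U)
    (r : S → S) (hr : Continuous r)
    (hunit : ∀ x : S, x * r x = x) :
    ∀ x : S, RightDicontAt (· * ·) r x := by
  intro x O hO
  -- get an entourage F with ball x F ⊆ O
  rw [UniformSpace.mem_nhds_iff] at hO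
  obtain ⟨F, hF, hFO⟩ := hO
  -- F' symmetric with F' ∘ F' ⊆ F
  obtain ⟨F', hF', hF'symm, hF'comp⟩ := comp_symm_mem_uniformity_sets hF
  -- V from left-uniformizability applied to F'
  obtain ⟨V, hV, hVmul⟩ := hlu F' hF'
  -- V' symmetric with V' ∘ V' ⊆ V
  obtain ⟨V', hV', hV'symm, hV'comp⟩ := comp_symm_mem_uniformity_sets hV
  refine ⟨UniformSpace.ball x F', UniformSpace.ball_mem_nhds x hF',
    UniformSpace.ball (r x) V' ∩ Set.range r, ?_, Set.inter_subset_right, ?_⟩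
  · exact Filter.inter_mem (mem_nhdsWithin_of_mem_nhds (UniformSpace.ball_mem_nhds _ hV')) self_mem_nhdsWithin
  · rintro z ⟨⟨hrz, -⟩, w, ⟨hw, -⟩, hzw⟩
    -- (w, r z) ∈ V
    have hwz : (w, r z) ∈ V := by
      apply hV'comp
      exact ⟨r x, hV'symm.symm _ _ hw, hrz⟩
    -- (z * w, z * r z) ∈ F', i.e. (z * w, z) ∈ F'
    have h1 : (z * w, z) ∈ F' := by
      have := hVmul z w (r z) hwz
      rwa [hunit z] at this
    -- (x, z * w) ∈ F'
    have h2 : (x, z * w) ∈ F' := hzw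
    exact hFO (hF'comp ⟨z * w, h2, h1⟩)
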